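/- The descent polynomial of (n-2)-stack sortable permutations satisfies W_{n,n-2}(x) = A_n(x) - x·A_{n-2}(x). -/

import Mathlib

open Polynomial

noncomputable section

/-- Number of descents of a permutation of `Fin n` (viewed as the word `σ 0, σ 1, …, σ (n-1)`). -/
def descents {n : ℕ} (σ : Equiv.Perm (Fin n)) : ℕ :=
  (Finset.univ.filter fun i : Fin n =>
    ∃ h : (i : ℕ) + 1 < n, σ ⟨(i : ℕ) + 1, h⟩ < σ i).card

/-- The Eulerian polynomial `A_n(x) = ∑_{σ ∈ S_n} x^{des σ}`. -/
def eulerianPoly (n : ℕ) : Polynomial ℝ :=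
  ∑ σ : Equiv.Perm (Fin n), X ^ descents σ

/-- The refined Eulerian polynomial `A_{n,i}(x)`: the descent generating polynomial over
permutations of `[n]` whose last entry is `n - i` (0-based: `σ (n-1) = n - 1 - i`). -/
def refinedEulerianPoly (n i : ℕ) : Polynomial ℝ :=
  ∑ σ ∈ Finset.univ.filter (fun σ : Equiv.Perm (Fin n) =>
      ∃ h : 0 < n, (σ ⟨n - 1, Nat.sub_lt h Nat.one_pos⟩ : ℕ) = n - 1 - i),
    X ^ descents σ

/-- The stack-sorting map `s`: `s(L m R) = s(L) s(R) m` where `m` is the maximal entry. -/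
def stackSort (w : List ℕ) : List ℕ :=
  if hw : w = [] then []
  else
    have hmem : w.foldr max 0 ∈ w := by
      induction w with
      | nil => simp at hw
      | cons a l ih =>
        rcases eq_or_ne l [] with h | h
        · simp [h]
        · rcases max_cases a (l.foldr max 0) with ⟨h1, _⟩ | ⟨h1, _⟩ <;>
            simp [List.foldr_cons, h1, ih h]
    have hi : w.idxOf (w.foldr max 0) < w.length := List.idxOf_lt_length_iff.mpr hmem
    stackSort (w.take (w.idxOf (w.foldr max 0))) ++
      stackSort (w.drop (w.idxOf (w.foldr max 0) + 1)) ++ [w.foldr max 0]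
termination_by w.length
decreasing_by
  · simp only [List.length_take, List.foldr_attach]; omega
  · simp only [List.length_drop]
    omega

/-- A permutation `σ ∈ S_n` is `t`-stack sortable if `t` applications of the stack-sorting
map to the word `σ₁ σ₂ ⋯ σₙ` yield the identity permutation. -/
def IsStackSortable (n t : ℕ) (σ : Equiv.Perm (Fin n)) : Prop :=
  stackSort^[t] (List.ofFn fun i => (σ i : ℕ)) = List.ofFn fun i : Fin n => (i : ℕ)

open Classical in
/-- `W_{n,t}(x)`: the descent polynomial of `t`-stack sortable permutations of `[n]`. -/
def stackSortablePoly (n t : ℕ) : Polynomial ℝ :=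
  ∑ σ ∈ Finset.univ.filter (fun σ : Equiv.Perm (Fin n) => IsStackSortable n t σ),
    X ^ descents σ

open Classical in
/-- `W_t(n,k)`: the number of `t`-stack sortable permutations of `[n]` with `k` descents. -/
def stackSortableCount (n t k : ℕ) : ℕ :=
  (Finset.univ.filter fun σ : Equiv.Perm (Fin n) =>
    IsStackSortable n t σ ∧ descents σ = k).card

/-- The Eulerian number `A(m,j)`: the number of permutations of `[m]` with `j` descents. -/
def eulerianNum (m j : ℕ) : ℕ :=
  (Finset.univ.filter fun σ : Equiv.Perm (Fin m) => descents σ = j).card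

open List

lemma stackSort_nil : stackSort [] = [] := by rw [stackSort]; simp

lemma foldr_max_mem (w : List ℕ) (hw : w ≠ []) : w.foldr max 0 ∈ w := by
  induction w with
  | nil => simp at hw
  | cons a l ih =>
    rcases eq_or_ne l [] with h | h
    · simp [h]
    · rcases max_cases a (l.foldr max 0) with ⟨h1, _⟩ | ⟨h1, _⟩ <;>
        simp [List.foldr_cons, h1, ih h]

lemma le_foldr_max {w : List ℕ} {x : ℕ} (hx : x ∈ w) : x ≤ w.foldr max 0 := by
  induction w with
  | nil => simp at hx
  | cons a l ih =>
    rcases List.mem_cons.mp hx with h | h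
    · simp [h]
    · exact le_trans (ih h) (by simp)

lemma stackSort_ne_nil (w : List ℕ) (hw : w ≠ []) :
    stackSort w = stackSort (w.take (w.idxOf (w.foldr max 0))) ++
      stackSort (w.drop (w.idxOf (w.foldr max 0) + 1)) ++ [w.foldr max 0] := by
  rw [stackSort]; simp [hw]

lemma decomp (w : List ℕ) (hw : w ≠ []) :
    w = w.take (w.idxOf (w.foldr max 0)) ++
      w.foldr max 0 :: w.drop (w.idxOf (w.foldr max 0) + 1) := by
  have hi : w.idxOf (w.foldr max 0) < w.length :=
    List.idxOf_lt_length_iff.mpr (foldr_max_mem w hw)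
  conv_lhs => rw [← List.take_append_drop (w.idxOf (w.foldr max 0)) w]
  rw [List.drop_eq_getElem_cons hi, List.getElem_idxOf hi]

lemma stackSort_perm (w : List ℕ) : (stackSort w).Perm w := by
  have H : ∀ n (w : List ℕ), w.length ≤ n → (stackSort w).Perm w := by
    intro n
    induction n with
    | zero => intro w hw; rw [List.length_eq_zero_iff.mp (Nat.le_zero.mp hw), stackSort_nil]
    | succ n ih =>
      intro w hw
      rcases eq_or_ne w [] with h | h
      · rw [h, stackSort_nil]
      · have hi : w.idxOf (w.foldr max 0) < w.length :=
          List.idxOf_lt_length_iff.mpr (foldr_max_mem w h)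
        rw [stackSort_ne_nil w h]
        have h1 := ih (w.take (w.idxOf (w.foldr max 0))) (by simp; omega)
        have h2 := ih (w.drop (w.idxOf (w.foldr max 0) + 1)) (by simp; omega)
        calc stackSort (w.take (w.idxOf (w.foldr max 0))) ++
              stackSort (w.drop (w.idxOf (w.foldr max 0) + 1)) ++ [w.foldr max 0]
            ~ w.take (w.idxOf (w.foldr max 0)) ++
              (w.drop (w.idxOf (w.foldr max 0) + 1) ++ [w.foldr max 0]) := by
              rw [List.append_assoc]; exact (h1.append (h2.append (List.Perm.refl _)))
          _ ~ w.take (w.idxOf (w.foldr max 0)) ++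
              ([w.foldr max 0] ++ w.drop (w.idxOf (w.foldr max 0) + 1)) :=
              (List.Perm.refl _).append List.perm_append_comm
          _ ~ w := by
              conv_rhs => rw [decomp w h]
              exact List.Perm.refl _
  exact H w.length w le_rfl

lemma stackSort_length (w : List ℕ) : (stackSort w).length = w.length :=
  (stackSort_perm w).length_eq

lemma foldr_max_of_le {v : List ℕ} {m : ℕ} (h : ∀ x ∈ v, x ≤ m) : v.foldr max m = m := by
  induction v with
  | nil => rfl
  | cons a l ih =>
    simp only [List.foldr_cons, ih (fun x hx => h x (List.mem_cons_of_mem a hx))]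
    exact max_eq_right (h a (List.mem_cons_self))

lemma foldr_max_append {v : List ℕ} {m : ℕ} (h : ∀ x ∈ v, x ≤ m) :
    (v ++ [m]).foldr max 0 = m := by
  rw [List.foldr_append]
  simpa using foldr_max_of_le h

lemma stackSort_singleton (m : ℕ) : stackSort [m] = [m] := by
  rw [stackSort_ne_nil [m] (by simp)]
  simp [stackSort_nil]

lemma stackSort_append_max {v : List ℕ} {m : ℕ} (h : ∀ x ∈ v, x ≤ m) (hm : m ∉ v) :
    stackSort (v ++ [m]) = stackSort v ++ [m] := by
  have hmax : (v ++ [m]).foldr max 0 = m := foldr_max_append h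
  have hidx : (v ++ [m]).idxOf ((v ++ [m]).foldr max 0) = v.length := by
    rw [hmax, List.idxOf_append_of_notMem hm, List.idxOf_cons_self]; omega
  rw [stackSort_ne_nil (v ++ [m]) (by simp), hidx, hmax]
  simp [List.take_left, List.drop_eq_nil_of_le, stackSort_nil]

lemma stackSort_iterate_append_max (t : ℕ) {v : List ℕ} {m : ℕ}
    (h : ∀ x ∈ v, x ≤ m) (hm : m ∉ v) :
    stackSort^[t] (v ++ [m]) = stackSort^[t] v ++ [m] := by
  induction t generalizing v with
  | zero => simp
  | succ t ih =>
    rw [Function.iterate_succ_apply, Function.iterate_succ_apply,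
      stackSort_append_max h hm]
    exact ih (fun x hx => h x ((stackSort_perm v).mem_iff.mp hx))
      (fun hx => hm ((stackSort_perm v).mem_iff.mp hx))

lemma stackSort_last (w : List ℕ) (hw : w ≠ []) :
    ∃ u, stackSort w = u ++ [w.foldr max 0] := by
  exact ⟨_, stackSort_ne_nil w hw⟩

/-- A word is "bad" if its second-to-last entry is its maximum and its last entry is
its minimum. -/
def BadList (w : List ℕ) : Prop :=
  ∃ u a b, w = u ++ [a, b] ∧ (∀ x ∈ w, x ≤ a) ∧ (∀ x ∈ w, b ≤ x)

lemma bad_suffix_iff {l v : List ℕ} {a b : ℕ} (h : l = v ++ [a, b]) :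
    BadList l ↔ (∀ x ∈ l, x ≤ a) ∧ (∀ x ∈ l, b ≤ x) := by
  constructor
  · rintro ⟨u', a', b', heq, h1, h2⟩
    have := List.append_inj' (h ▸ heq : v ++ [a, b] = u' ++ [a', b']) rfl
    obtain ⟨-, h3⟩ := this
    simp only [List.cons.injEq, and_true] at h3
    obtain ⟨rfl, rfl, -⟩ := h3
    exact ⟨h1, h2⟩
  · rintro ⟨h1, h2⟩
    exact ⟨v, a, b, h, h1, h2⟩

lemma mem_of_suffix {l v : List ℕ} {a b : ℕ} (h : l = v ++ [a, b]) :
    a ∈ l ∧ b ∈ l := by subst h; simp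

lemma badW_iff {L R : List ℕ} {m : ℕ} (hnd : (L ++ m :: R).Nodup)
    (hm : ∀ x ∈ L ++ m :: R, x ≤ m) :
    BadList (L ++ m :: R) ↔ ∃ b, R = [b] ∧ ∀ x ∈ L ++ m :: R, b ≤ x := by
  constructor
  · rintro ⟨u', a', b', heq, h1, h2⟩
    have ha' : a' = m :=
      le_antisymm (hm a' (mem_of_suffix heq).1) (h1 m (by simp))
    rw [ha'] at heq
    have hndu : (u' ++ [m, b']).Nodup := heq ▸ hnd
    have hmu : m ∉ u' := by
      simp only [List.nodup_append] at hndu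
      intro hc
      exact hndu.2.2 m hc m (by simp) rfl
    have hmL : m ∉ L := by
      simp only [List.nodup_append] at hnd
      intro hc
      exact hnd.2.2 m hc m (by simp) rfl
    have e1 : (L ++ m :: R).idxOf m = L.length := by
      rw [List.idxOf_append_of_notMem hmL, List.idxOf_cons_self]; omega
    have e2 : (u' ++ [m, b']).idxOf m = u'.length := by
      rw [List.idxOf_append_of_notMem hmu, List.idxOf_cons_self]; omega
    have eLu : L.length = u'.length := by
      rw [heq, e2] at e1; omega
    have hlen : L.length + (R.length + 1) = u'.length + 2 := by
      have := congrArg List.length heq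
      simpa using this
    have hR1 : R.length = 1 := by omega
    obtain ⟨r, rfl⟩ := List.length_eq_one_iff.mp hR1
    have heq' : L ++ [m, r] = u' ++ [m, b'] := heq
    obtain ⟨-, h4⟩ := List.append_inj heq' eLu
    simp only [List.cons.injEq, and_true] at h4
    refine ⟨r, rfl, ?_⟩
    intro x hx
    have := h2 x hx
    omega
  · rintro ⟨b, rfl, hb⟩
    exact (bad_suffix_iff (show L ++ m :: [b] = L ++ [m, b] from rfl)).mpr ⟨hm, hb⟩

lemma nodup_LR {L R : List ℕ} {m : ℕ} (hnd : (L ++ m :: R).Nodup) : (L ++ R).Nodup := by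
  have hsub : L ++ R <+ L ++ m :: R := (List.sublist_cons_self m R).append_left L
  exact hnd.sublist hsub

lemma sortSort_append_perm (L R : List ℕ) :
    (stackSort L ++ stackSort R).Perm (L ++ R) :=
  (stackSort_perm L).append (stackSort_perm R)

lemma badU_iff {L R : List ℕ} {m : ℕ} (hnd : (L ++ m :: R).Nodup)
    (hm : ∀ x ∈ L ++ m :: R, x ≤ m) (hlen : 2 ≤ L.length + R.length) :
    BadList (stackSort L ++ stackSort R) ↔
      ∃ b, R = [b] ∧ ∀ x ∈ L ++ m :: R, b ≤ x := by
  have hpm := sortSort_append_perm L R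
  have hndu : (stackSort L ++ stackSort R).Nodup := hpm.nodup_iff.mpr (nodup_LR hnd)
  match R with
  | [] =>
    simp only [List.cons_ne_nil, false_and, exists_false, iff_false,
      reduceCtorEq, and_false]
    rintro ⟨u', a, b, heq, h1, h2⟩
    have hL : L ≠ [] := by
      intro h; subst h; simp at hlen
    obtain ⟨v, hv⟩ := stackSort_last L hL
    have heq2 : v ++ [L.foldr max 0] = u' ++ [a] ++ [b] := by
      rw [← hv]; simpa [stackSort_nil, List.append_assoc] using heq
    obtain ⟨-, hb⟩ := List.append_inj' heq2 rfl
    simp only [List.cons.injEq, and_true] at hb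
    have hmaxmem : L.foldr max 0 ∈ stackSort L ++ stackSort [] := by
      simp [stackSort_nil, (stackSort_perm L).mem_iff, foldr_max_mem L hL]
    have hamem : a ∈ L := by
      have := (mem_of_suffix heq).1
      rw [(sortSort_append_perm L []).mem_iff] at this
      simpa using this
    have hale : a ≤ L.foldr max 0 := le_foldr_max hamem
    have : L.foldr max 0 ≤ a := hb ▸ h2 a (mem_of_suffix heq).1
    have hab : a = b := by omega
    have : (u' ++ [a, b]).Nodup := heq ▸ hndu
    simp [List.nodup_append, hab] at this
  | [b] =>
    have hL : L ≠ [] := by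
      intro h; subst h; simp at hlen
    obtain ⟨v, hv⟩ := stackSort_last L hL
    have hu : stackSort L ++ stackSort [b] = v ++ [L.foldr max 0, b] := by
      rw [stackSort_singleton, hv, List.append_assoc]; rfl
    rw [bad_suffix_iff hu]
    have hmemiff : ∀ x, x ∈ stackSort L ++ stackSort [b] ↔ x ∈ L ++ [b] :=
      fun x => (sortSort_append_perm L [b]).mem_iff
    have hmaxL_mem_w : L.foldr max 0 ∈ L ++ m :: [b] :=
      List.mem_append_left _ (foldr_max_mem L hL)
    constructor
    · rintro ⟨h1, h2⟩
      refine ⟨b, rfl, ?_⟩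
      intro x hx
      rcases List.mem_append.mp hx with hxL | hxR
      · exact h2 x ((hmemiff x).mpr (List.mem_append_left _ hxL))
      · rcases List.mem_cons.mp hxR with rfl | hxb
        · -- x = m : b ≤ m
          exact le_trans (h2 b ((hmemiff b).mpr (by simp))) (hm b (by simp))
        · simp only [List.mem_singleton] at hxb
          subst hxb
          exact le_refl x
    · rintro ⟨b', hb', hball⟩
      simp only [List.cons.injEq, and_true] at hb'
      subst hb'
      constructor
      · intro x hx
        rcases List.mem_append.mp ((hmemiff x).mp hx) with hxL | hxb
        · exact le_foldr_max hxL
        · simp only [List.mem_singleton] at hxb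
          subst hxb
          exact hball _ hmaxL_mem_w
      · intro x hx
        rcases List.mem_append.mp ((hmemiff x).mp hx) with hxL | hxb
        · exact hball x (List.mem_append_left _ hxL)
        · simp only [List.mem_singleton] at hxb
          subst hxb
          exact le_refl x
  | r₁ :: r₂ :: R' =>
    simp only [List.cons.injEq, reduceCtorEq, and_false, false_and, exists_false, iff_false]
    rintro hbad
    set R := r₁ :: r₂ :: R' with hR
    have hRne : R ≠ [] := by simp [hR]
    obtain ⟨v, hv⟩ := stackSort_last R hRne
    have hvne : v ≠ [] := by
      intro h
      have := congrArg List.length hv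
      rw [h, stackSort_length] at this
      simp [hR] at this
    obtain ⟨v₂, q, hv₂⟩ := List.eq_nil_or_concat v |>.resolve_left hvne
    have hu : stackSort L ++ stackSort R = (stackSort L ++ v₂) ++ [q, R.foldr max 0] := by
      rw [hv, hv₂]; simp [List.append_assoc]
    rw [bad_suffix_iff hu] at hbad
    obtain ⟨h1, h2⟩ := hbad
    have hqmem : q ∈ stackSort L ++ stackSort R := by
      rw [hu]; simp
    have hmaxmem : R.foldr max 0 ∈ stackSort L ++ stackSort R := by
      rw [hu]; simp
    have hqR : q ∈ R := by
      refine (stackSort_perm R).mem_iff.mp ?_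
      rw [hv, hv₂]; simp
    have e1 : q ≤ R.foldr max 0 := le_foldr_max hqR
    have e2 : R.foldr max 0 ≤ q := h1 _ hmaxmem
    have : (stackSort L ++ v₂ ++ [q, R.foldr max 0]).Nodup := hu ▸ hndu
    simp only [List.nodup_append, List.nodup_cons] at this
    have : q ≠ R.foldr max 0 := by
      intro h
      exact this.2.1.1 (by simp [h])
    omega

lemma sorted_append_singleton {v : List ℕ} {m : ℕ} (h : ∀ x ∈ v, x < m) :
    (v ++ [m]).Pairwise (· < ·) ↔ v.Pairwise (· < ·) := by
  show List.Pairwise _ _ ↔ List.Pairwise _ _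
  rw [List.pairwise_append]
  constructor
  · rintro ⟨h1, -, -⟩; exact h1
  · intro h1
    refine ⟨h1, by simp, ?_⟩
    intro x hx y hy
    simp only [List.mem_singleton] at hy
    subst hy
    exact h x hx

lemma main_lemma : ∀ (n : ℕ) (w : List ℕ), w.Nodup → w.length = n + 2 →
    ((stackSort^[n] w).Pairwise (· < ·) ↔ ¬ BadList w) := by
  intro n
  induction n with
  | zero =>
    intro w hnd hlen
    obtain ⟨a, b, rfl⟩ := List.length_eq_two.mp hlen
    have hab : a ≠ b := by simp at hnd; exact hnd
    rw [Function.iterate_zero_apply, bad_suffix_iff (show [a,b] = [] ++ [a,b] from rfl)]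
    constructor
    · intro hs hc
      have h1 := hc.2 a (by simp)
      have h2 : a < b := List.rel_of_pairwise_cons hs (by simp)
      omega
    · intro hc
      have hab' : a < b := by
        by_contra hle
        push_neg at hle
        refine hc ⟨?_, ?_⟩
        · intro x hx; simp only [List.mem_cons, List.mem_singleton,
            List.not_mem_nil, or_false] at hx
          rcases hx with rfl | rfl <;> omega
        · intro x hx; simp only [List.mem_cons, List.mem_singleton,
            List.not_mem_nil, or_false] at hx
          rcases hx with rfl | rfl <;> omega
      simp [List.pairwise_cons, hab']
  | succ n ih =>
    intro w hnd hlen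
    have hwne : w ≠ [] := by intro h; simp [h] at hlen
    have hdec := decomp w hwne
    set m := w.foldr max 0 with hm
    set L := w.take (w.idxOf m) with hL
    set R := w.drop (w.idxOf m + 1) with hR
    have hm_all : ∀ x ∈ w, x ≤ m := fun x hx => le_foldr_max hx
    have hndLR : (L ++ m :: R).Nodup := hdec ▸ hnd
    have hmLR : ∀ x ∈ L ++ m :: R, x ≤ m := fun x hx => hm_all x (hdec ▸ hx)
    have hmnotin : m ∉ L ++ R := by
      simp only [List.nodup_append, List.nodup_cons, List.mem_append] at hndLR
      intro hc0
      rcases List.mem_append.mp hc0 with hc | hc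
      · exact hndLR.2.2 m hc m (by simp) rfl
      · exact hndLR.2.1.1 hc
    have hlenLR : L.length + R.length = n + 2 := by
      have := congrArg List.length hdec
      simp only [List.length_append, List.length_cons] at this
      omega
    have hstep : stackSort w = (stackSort L ++ stackSort R) ++ [m] := by
      rw [stackSort_ne_nil w hwne]
    have hmem_u : ∀ x ∈ stackSort L ++ stackSort R, x ∈ L ++ R :=
      fun x hx => (sortSort_append_perm L R).mem_iff.mp hx
    have hlt_u : ∀ x ∈ stackSort L ++ stackSort R, x < m := by
      intro x hx
      have hx' := hmem_u x hx
      have hle : x ≤ m := hmLR x (by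
        rcases List.mem_append.mp hx' with h | h
        · exact List.mem_append_left _ h
        · exact List.mem_append_right _ (List.mem_cons_of_mem _ h))
      have hne : x ≠ m := fun h => hmnotin (h ▸ hx')
      omega
    have hiter : stackSort^[n + 1] w = stackSort^[n] (stackSort L ++ stackSort R) ++ [m] := by
      rw [Function.iterate_succ_apply, hstep]
      exact stackSort_iterate_append_max n
        (fun x hx => le_of_lt (hlt_u x hx))
        (fun hc => absurd rfl (ne_of_lt (hlt_u m hc)))
    have hnd_u : (stackSort L ++ stackSort R).Nodup :=
      (sortSort_append_perm L R).nodup_iff.mpr (nodup_LR hndLR)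
    have hlen_u : (stackSort L ++ stackSort R).length = n + 2 := by
      simp [stackSort_length]; omega
    have hlt_u' : ∀ x ∈ stackSort^[n] (stackSort L ++ stackSort R), x < m := by
      intro x hx
      refine hlt_u x ?_
      have : ∀ t v, (stackSort^[t] v : List ℕ).Perm v := by
        intro t
        induction t with
        | zero => intro v; simp
        | succ t iht => intro v; rw [Function.iterate_succ_apply]
                        exact (iht (stackSort v)).trans (stackSort_perm v)
      exact (this n _).mem_iff.mp hx
    rw [hiter, sorted_append_singleton hlt_u',
      ih _ hnd_u hlen_u]
    have hbw : BadList w ↔ BadList (stackSort L ++ stackSort R) := by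
      rw [show (BadList w ↔ BadList (L ++ m :: R)) from by rw [← hdec]]
      rw [badW_iff hndLR hmLR, badU_iff hndLR hmLR (by omega)]
    rw [hbw]

lemma stackSort_iterate_perm (t : ℕ) (v : List ℕ) : (stackSort^[t] v).Perm v := by
  induction t generalizing v with
  | zero => simp
  | succ t iht =>
    rw [Function.iterate_succ_apply]
    exact (iht (stackSort v)).trans (stackSort_perm v)

lemma ofFn_val_eq_range (n : ℕ) : (List.ofFn fun i : Fin n => (i : ℕ)) = List.range n := by
  apply List.ext_getElem
  · simp
  · intro i h1 h2
    simp

lemma word_nodup {n : ℕ} (σ : Equiv.Perm (Fin n)) :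
    (List.ofFn fun i => (σ i : ℕ)).Nodup :=
  List.nodup_ofFn.mpr (Fin.val_injective.comp (σ.injective))

lemma word_perm_range {n : ℕ} (σ : Equiv.Perm (Fin n)) :
    (List.ofFn fun i => (σ i : ℕ)).Perm (List.range n) := by
  rw [List.perm_ext_iff_of_nodup (word_nodup σ) List.nodup_range]
  intro a
  simp only [List.mem_ofFn, Set.mem_range, List.mem_range]
  constructor
  · rintro ⟨i, rfl⟩; exact (σ i).isLt
  · intro ha
    exact ⟨σ.symm ⟨a, ha⟩, by simp⟩

lemma sortable_iff_not_bad (k : ℕ) (σ : Equiv.Perm (Fin (k + 2))) :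
    IsStackSortable (k + 2) k σ ↔ ¬ BadList (List.ofFn fun i => (σ i : ℕ)) := by
  have hlen : (List.ofFn fun i => (σ i : ℕ)).length = k + 2 := by simp
  have hmain := main_lemma k _ (word_nodup σ) hlen
  unfold IsStackSortable
  rw [ofFn_val_eq_range]
  constructor
  · intro h
    rw [← hmain, h]
    exact List.pairwise_lt_range
  · intro h
    have hs := hmain.mpr h
    have hp : (stackSort^[k] (List.ofFn fun i => (σ i : ℕ))).Perm (List.range (k + 2)) :=
      (stackSort_iterate_perm k _).trans (word_perm_range σ)
    exact List.Perm.eq_of_pairwise' (hs.imp (fun h => le_of_lt h) : List.Pairwise (· ≤ ·) _)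
      (List.pairwise_lt_range.imp (fun h => le_of_lt h)) hp

lemma bad_word_iff (k : ℕ) (σ : Equiv.Perm (Fin (k + 2))) :
    BadList (List.ofFn fun i => (σ i : ℕ)) ↔
      (σ ⟨k, by omega⟩ : ℕ) = k + 1 ∧ (σ ⟨k + 1, by omega⟩ : ℕ) = 0 := by
  set w := List.ofFn fun i => (σ i : ℕ) with hw
  have hlen : w.length = k + 2 := by simp [hw]
  have hmem : ∀ x, x ∈ w ↔ x < k + 2 := by
    intro x
    rw [(word_perm_range σ).mem_iff]
    exact List.mem_range
  have hdecw : w = w.take k ++ [(σ ⟨k, by omega⟩ : ℕ), (σ ⟨k + 1, by omega⟩ : ℕ)] := by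
    have h1 : w.drop k = w[k] :: w.drop (k + 1) :=
      List.drop_eq_getElem_cons (by omega)
    have h2 : w.drop (k + 1) = w[k + 1] :: w.drop (k + 2) :=
      List.drop_eq_getElem_cons (by omega)
    have h3 : w.drop (k + 2) = [] := List.drop_eq_nil_of_le (by omega)
    have e1 : w[k] = (σ ⟨k, by omega⟩ : ℕ) := by
      simp only [hw, List.getElem_ofFn]
    have e2 : w[k + 1] = (σ ⟨k + 1, by omega⟩ : ℕ) := by
      simp only [hw, List.getElem_ofFn]
    conv_lhs => rw [← List.take_append_drop k w, h1, h2, h3]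
    rw [e1, e2]
  constructor
  · rintro ⟨u, a, b, heq, h1, h2⟩
    have hlenu : u.length = k := by
      have := congrArg List.length heq
      simp only [hlen, List.length_append, List.length_cons, List.length_nil] at this
      omega
    have htake : w.take k = u := by
      rw [heq, ← hlenu, List.take_left]
    have := heq
    rw [hdecw, htake] at this
    have h4 := (List.append_inj this rfl).2
    simp only [List.cons.injEq, and_true] at h4
    obtain ⟨ha, hb⟩ := h4
    have ha' : a = k + 1 := by
      have h5 : a < k + 2 := (hmem a).mp (mem_of_suffix heq).1
      have h6 : (k + 1 : ℕ) ≤ a := h1 (k + 1) ((hmem _).mpr (by omega))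
      omega
    have hb' : b = 0 := by
      have := h2 0 ((hmem 0).mpr (by omega))
      omega
    exact ⟨ha ▸ ha', hb ▸ hb'⟩
  · rintro ⟨h1, h2⟩
    refine ⟨w.take k, _, _, hdecw, ?_, ?_⟩
    · intro x hx
      have := (hmem x).mp hx
      rw [h1]; omega
    · intro x hx
      rw [h2]; omega

/-- The function underlying the bad permutation associated to `τ`. -/
def badFun (k : ℕ) (τ : Equiv.Perm (Fin k)) : Fin (k + 2) → Fin (k + 2) :=
  fun i => if h : (i : ℕ) < k then ⟨(τ ⟨i, h⟩ : ℕ) + 1, by have := (τ ⟨i, h⟩).isLt; omega⟩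
    else if (i : ℕ) = k then ⟨k + 1, by omega⟩ else ⟨0, by omega⟩

lemma badFun_injective (k : ℕ) (τ : Equiv.Perm (Fin k)) :
    Function.Injective (badFun k τ) := by
  intro i j hij
  unfold badFun at hij
  by_cases hi : (i : ℕ) < k <;> by_cases hj : (j : ℕ) < k
  · rw [dif_pos hi, dif_pos hj] at hij
    have h1 : (τ ⟨i, hi⟩ : ℕ) = (τ ⟨j, hj⟩ : ℕ) := by
      have := congrArg Fin.val hij
      simpa using this
    have h2 : (⟨(i:ℕ), hi⟩ : Fin k) = ⟨(j:ℕ), hj⟩ :=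
      τ.injective (Fin.val_injective h1)
    have := congrArg Fin.val h2
    exact Fin.val_injective this
  · rw [dif_pos hi, dif_neg hj] at hij
    have h1 := congrArg Fin.val hij
    have h2 := (τ ⟨i, hi⟩).isLt
    split_ifs at h1 <;> simp at h1 <;> omega
  · rw [dif_neg hi, dif_pos hj] at hij
    have h1 := congrArg Fin.val hij
    have h2 := (τ ⟨j, hj⟩).isLt
    split_ifs at h1 <;> simp at h1 <;> omega
  · rw [dif_neg hi, dif_neg hj] at hij
    have h1 := congrArg Fin.val hij
    have hik : (i : ℕ) < k + 2 := i.isLt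
    have hjk : (j : ℕ) < k + 2 := j.isLt
    split_ifs at h1 <;> simp at h1 <;> apply Fin.val_injective <;> omega

/-- The bad permutation associated to `τ`. -/
def badPerm (k : ℕ) (τ : Equiv.Perm (Fin k)) : Equiv.Perm (Fin (k + 2)) :=
  Equiv.ofBijective (badFun k τ)
    (Finite.injective_iff_bijective.mp (badFun_injective k τ))

lemma badPerm_apply (k : ℕ) (τ : Equiv.Perm (Fin k)) (i : Fin (k + 2)) :
    badPerm k τ i = badFun k τ i := rfl

lemma badPerm_apply_lt (k : ℕ) (τ : Equiv.Perm (Fin k)) (i : Fin (k + 2))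
    (h : (i : ℕ) < k) :
    (badPerm k τ i : ℕ) = (τ ⟨(i : ℕ), h⟩ : ℕ) + 1 := by
  rw [badPerm_apply]; unfold badFun; rw [dif_pos h]

lemma badPerm_apply_k (k : ℕ) (τ : Equiv.Perm (Fin k)) (i : Fin (k + 2))
    (h : (i : ℕ) = k) :
    (badPerm k τ i : ℕ) = k + 1 := by
  rw [badPerm_apply]; unfold badFun
  rw [dif_neg (by omega), if_pos h]

lemma badPerm_apply_last (k : ℕ) (τ : Equiv.Perm (Fin k)) (i : Fin (k + 2))
    (h : (i : ℕ) = k + 1) :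
    (badPerm k τ i : ℕ) = 0 := by
  rw [badPerm_apply]; unfold badFun
  rw [dif_neg (by omega), if_neg (by omega)]

lemma badPerm_injective (k : ℕ) : Function.Injective (badPerm k) := by
  intro τ τ' h
  apply Equiv.ext
  intro i
  apply Fin.val_injective
  have h1 := congrArg (fun e : Equiv.Perm (Fin (k + 2)) =>
    (e (Fin.castLE (by omega) i) : ℕ)) h
  rw [badPerm_apply_lt k τ _ (by simpa using i.isLt),
    badPerm_apply_lt k τ' _ (by simpa using i.isLt)] at h1
  simpa using h1

lemma badPerm_surjective (k : ℕ) (σ : Equiv.Perm (Fin (k + 2)))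
    (h1 : (σ ⟨k, by omega⟩ : ℕ) = k + 1) (h2 : (σ ⟨k + 1, by omega⟩ : ℕ) = 0) :
    ∃ τ : Equiv.Perm (Fin k), badPerm k τ = σ := by
  have hval : ∀ i : Fin (k + 2), ((i : ℕ) < k) → 1 ≤ (σ i : ℕ) ∧ (σ i : ℕ) ≤ k := by
    intro i hik
    have hlt : (σ i : ℕ) < k + 2 := (σ _).isLt
    constructor
    · rcases Nat.eq_zero_or_pos (σ i : ℕ) with h0 | h0
      · exfalso
        have he : σ i = σ ⟨k + 1, by omega⟩ := Fin.val_injective (by omega)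
        have := congrArg Fin.val (σ.injective he)
        simp only [Fin.val_mk] at this
        omega
      · omega
    · by_contra hgt
      push_neg at hgt
      have he : σ i = σ ⟨k, by omega⟩ := Fin.val_injective (by omega)
      have := congrArg Fin.val (σ.injective he)
      simp only [Fin.val_mk] at this
      omega
  set g : Fin k → Fin k := fun i =>
    ⟨(σ (Fin.castLE (by omega) i) : ℕ) - 1, by
      have := hval (Fin.castLE (by omega) i) (by simpa using i.isLt); omega⟩ with hg
  have hginj : Function.Injective g := by
    intro i j hij
    have h3 := congrArg Fin.val hij
    simp only [hg] at h3
    have h4 := hval (Fin.castLE (by omega) i) (by simpa using i.isLt)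
    have h5 := hval (Fin.castLE (by omega) j) (by simpa using j.isLt)
    have h6 : (σ (Fin.castLE (by omega) i) : ℕ) = (σ (Fin.castLE (by omega) j) : ℕ) := by
      omega
    have h7 := σ.injective (Fin.val_injective h6)
    have := congrArg Fin.val h7
    apply Fin.val_injective
    simpa using this
  have hbij := Finite.injective_iff_bijective.mp hginj
  refine ⟨Equiv.ofBijective g hbij, ?_⟩
  apply Equiv.ext
  intro i
  apply Fin.val_injective
  rcases Nat.lt_trichotomy (i : ℕ) k with hik | hik | hik
  · rw [badPerm_apply_lt k (Equiv.ofBijective g hbij) i hik]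
    have hτv : ((Equiv.ofBijective g hbij) ⟨(i : ℕ), hik⟩ : ℕ) = (σ (Fin.castLE (by omega) ⟨(i : ℕ), hik⟩) : ℕ) - 1 := rfl
    have hcast : Fin.castLE (by omega : k ≤ k + 2) (⟨(i : ℕ), hik⟩ : Fin k) = i :=
      Fin.val_injective rfl
    rw [hτv, hcast]
    have := hval i hik
    omega
  · have he : i = ⟨k, by omega⟩ := Fin.val_injective hik
    rw [badPerm_apply_k k (Equiv.ofBijective g hbij) i hik, he, h1]
  · have hik' : (i : ℕ) = k + 1 := by have := i.isLt; omega
    have he : i = ⟨k + 1, by omega⟩ := Fin.val_injective hik'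
    rw [badPerm_apply_last k (Equiv.ofBijective g hbij) i hik', he, h2]

lemma descents_badPerm (k : ℕ) (τ : Equiv.Perm (Fin k)) :
    descents (badPerm k τ) = descents τ + 1 := by
  unfold descents
  have hcastinj : Function.Injective (Fin.castLE (show k ≤ k + 2 by omega)) :=
    Fin.castLE_injective _
  have hins : (Finset.univ.filter fun i : Fin (k + 2) =>
        ∃ h : (i : ℕ) + 1 < k + 2, badPerm k τ ⟨(i : ℕ) + 1, h⟩ < badPerm k τ i)
      = insert (⟨k, by omega⟩ : Fin (k + 2))
        ((Finset.univ.filter fun i : Fin k =>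
          ∃ h : (i : ℕ) + 1 < k, τ ⟨(i : ℕ) + 1, h⟩ < τ i).image
            (Fin.castLE (show k ≤ k + 2 by omega))) := by
    ext i
    simp only [Finset.mem_filter, Finset.mem_univ, true_and, Finset.mem_insert,
      Finset.mem_image]
    constructor
    · rintro ⟨h, hlt⟩
      have hv := Fin.lt_def.mp hlt
      by_cases hik : (i : ℕ) = k
      · exact Or.inl (Fin.val_injective hik)
      · have hi2 : (i : ℕ) < k := by
          rcases Nat.lt_trichotomy ((i : ℕ)) k with hh | hh | hh
          · exact hh
          · exact absurd hh hik
          · exfalso; omega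
        by_cases hik1 : (i : ℕ) + 1 = k
        · exfalso
          have e1 : (badPerm k τ ⟨(i : ℕ) + 1, h⟩ : ℕ) = k + 1 :=
            badPerm_apply_k k τ _ hik1
          have e2 : (badPerm k τ i : ℕ) = (τ ⟨(i : ℕ), hi2⟩ : ℕ) + 1 :=
            badPerm_apply_lt k τ i hi2
          have := (τ ⟨(i : ℕ), hi2⟩).isLt
          omega
        · have hikk : (i : ℕ) + 1 < k := by omega
          refine Or.inr ⟨⟨(i : ℕ), hi2⟩, ⟨hikk, ?_⟩, Fin.val_injective rfl⟩
          have e1 : (badPerm k τ ⟨(i : ℕ) + 1, h⟩ : ℕ) = (τ ⟨(i : ℕ) + 1, hikk⟩ : ℕ) + 1 :=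
            badPerm_apply_lt k τ _ hikk
          have e2 : (badPerm k τ i : ℕ) = (τ ⟨(i : ℕ), hi2⟩ : ℕ) + 1 :=
            badPerm_apply_lt k τ i hi2
          refine Fin.lt_def.mpr ?_
          simp only [Fin.val_mk]
          omega
    · rintro (rfl | ⟨j, ⟨hjk, hjlt⟩, rfl⟩)
      · refine ⟨by simp only [Fin.val_mk]; omega, ?_⟩
        have e1 : (badPerm k τ ⟨k + 1, by omega⟩ : ℕ) = 0 :=
          badPerm_apply_last k τ _ rfl
        have e2 : (badPerm k τ ⟨k, by omega⟩ : ℕ) = k + 1 :=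
          badPerm_apply_k k τ _ rfl
        refine Fin.lt_def.mpr ?_
        simp only [Fin.val_mk]
        omega
      · have hjv : ((Fin.castLE (show k ≤ k + 2 by omega) j : Fin (k + 2)) : ℕ) = (j : ℕ) := rfl
        refine ⟨by omega, ?_⟩
        have e1 : (badPerm k τ ⟨(j : ℕ) + 1,
            by omega⟩ : ℕ) = (τ ⟨(j : ℕ) + 1, hjk⟩ : ℕ) + 1 :=
          badPerm_apply_lt k τ _ (by simp only [Fin.val_mk]; omega)
        have e2 : (badPerm k τ (Fin.castLE (show k ≤ k + 2 by omega) j) : ℕ) = (τ j : ℕ) + 1 :=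
          badPerm_apply_lt k τ _ (by omega)
        have hjlt' := Fin.lt_def.mp hjlt
        refine Fin.lt_def.mpr ?_
        simp only [Fin.coe_castLE]
        omega
  rw [hins, Finset.card_insert_of_notMem, Finset.card_image_of_injective _ hcastinj]
  simp only [Finset.mem_image]
  rintro ⟨j, -, hj⟩
  have := congrArg Fin.val hj
  simp only [Fin.coe_castLE, Fin.val_mk] at this
  have := j.isLt
  omega

theorem stackSortablePoly_eq (n : ℕ) (hn : 2 ≤ n) :
    stackSortablePoly n (n - 2) = eulerianPoly n - X * eulerianPoly (n - 2) := by
  classical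
  obtain ⟨k, rfl⟩ : ∃ k, n = k + 2 := ⟨n - 2, by omega⟩
  have h2 : k + 2 - 2 = k := by omega
  rw [h2]
  unfold stackSortablePoly eulerianPoly
  have hfilt2 : (Finset.univ.filter fun σ : Equiv.Perm (Fin (k + 2)) =>
        ¬ IsStackSortable (k + 2) k σ)
      = Finset.univ.filter (fun σ : Equiv.Perm (Fin (k + 2)) =>
          (σ ⟨k, by omega⟩ : ℕ) = k + 1 ∧ (σ ⟨k + 1, by omega⟩ : ℕ) = 0) := by
    ext σ
    simp only [Finset.mem_filter, Finset.mem_univ, true_and]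
    rw [sortable_iff_not_bad k σ, not_not, bad_word_iff k σ]
  have hbad : ∑ σ ∈ (Finset.univ.filter fun σ : Equiv.Perm (Fin (k + 2)) =>
        ¬ IsStackSortable (k + 2) k σ), (X : Polynomial ℝ) ^ descents σ
      = X * ∑ τ : Equiv.Perm (Fin k), (X : Polynomial ℝ) ^ descents τ := by
    rw [hfilt2]
    have hsum : ∑ τ : Equiv.Perm (Fin k), (X : Polynomial ℝ) ^ (descents τ + 1)
        = ∑ σ ∈ Finset.univ.filter (fun σ : Equiv.Perm (Fin (k + 2)) =>
            (σ ⟨k, by omega⟩ : ℕ) = k + 1 ∧ (σ ⟨k + 1, by omega⟩ : ℕ) = 0),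
          (X : Polynomial ℝ) ^ descents σ := by
      refine Finset.sum_bij (fun τ _ => badPerm k τ) ?_ ?_ ?_ ?_
      · intro τ _
        simp only [Finset.mem_filter, Finset.mem_univ, true_and]
        exact ⟨badPerm_apply_k k τ _ rfl, badPerm_apply_last k τ _ rfl⟩
      · intro τ _ τ' _ h
        exact badPerm_injective k h
      · intro σ hσ
        simp only [Finset.mem_filter, Finset.mem_univ, true_and] at hσ
        obtain ⟨τ, hτ⟩ := badPerm_surjective k σ hσ.1 hσ.2
        exact ⟨τ, Finset.mem_univ τ, hτ⟩
      · intro τ _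
        rw [descents_badPerm k τ]
    rw [← hsum]
    simp_rw [pow_succ]
    rw [← Finset.sum_mul, mul_comm]
  have hsplit := Finset.sum_filter_add_sum_filter_not Finset.univ
    (fun σ : Equiv.Perm (Fin (k + 2)) => IsStackSortable (k + 2) k σ)
    (fun σ => (X : Polynomial ℝ) ^ descents σ)
  rw [hbad] at hsplit
  exact eq_sub_of_add_eq hsplit

end
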